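/- arXiv:2307.11347 — 2 statements merged into one kernel-verified Lean document; each statement's English description precedes it below -/
import Mathlib

section
/- Suppose the t-structure (D^{≤0}, D^{≥1}) is nondegenerate and let n be a positive integer. Then the bijection between ICE sequences in H and homology-determined preaisles in D restricts to a bijective correspondence between the set of ICE sequences in H of length n and the set of n-intermediate homology-determined preaisles in D. -/
open CategoryTheory Limits ZeroObject

namespace ICEPaper

section AbelianPart


variable {A : Type*} [Category A] [Abelian A]

/-- A full additive subcategory (given by its class of objects), closed under isomorphisms. -/
structure IsSubcat (C : Set A) : Prop where
  mem_of_iso : ∀ ⦃X Y : A⦄, (X ≅ Y) → X ∈ C → Y ∈ C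
  zero_mem : (0 : A) ∈ C
  biprod_mem : ∀ ⦃X Y : A⦄, X ∈ C → Y ∈ C → (X ⊞ Y) ∈ C

/-- `C` is closed under extensions. -/
def ClosedUnderExtensions (C : Set A) : Prop :=
  ∀ (S : ShortComplex A), S.ShortExact → S.X₁ ∈ C → S.X₃ ∈ C → S.X₂ ∈ C

/-- `C` is closed under quotients in `A`. -/
def ClosedUnderQuotients (C : Set A) : Prop :=
  ∀ ⦃X Y : A⦄ (f : X ⟶ Y), Epi f → X ∈ C → Y ∈ C

/-- `C` is closed under images. -/
def ClosedUnderImages (C : Set A) : Prop :=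
  ∀ ⦃X Y : A⦄ (f : X ⟶ Y), X ∈ C → Y ∈ C → image f ∈ C

/-- `C` is closed under cokernels. -/
def ClosedUnderCokernels (C : Set A) : Prop :=
  ∀ ⦃X Y : A⦄ (f : X ⟶ Y), X ∈ C → Y ∈ C → cokernel f ∈ C

/-- `C` is closed under kernels. -/
def ClosedUnderKernels (C : Set A) : Prop :=
  ∀ ⦃X Y : A⦄ (f : X ⟶ Y), X ∈ C → Y ∈ C → kernel f ∈ C

/-- `C` is a torsion class in `A`. -/
structure IsTorsionClass (C : Set A) : Prop where
  subcat : IsSubcat C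
  ext : ClosedUnderExtensions C
  quot : ClosedUnderQuotients C

/-- `C` is a wide subcategory of `A`. -/
structure IsWide (C : Set A) : Prop where
  subcat : IsSubcat C
  ext : ClosedUnderExtensions C
  ker : ClosedUnderKernels C
  coker : ClosedUnderCokernels C

/-- `C` is an ICE-closed subcategory of `A`. -/
structure IsICEClosed (C : Set A) : Prop where
  subcat : IsSubcat C
  im : ClosedUnderImages C
  coker : ClosedUnderCokernels C
  ext : ClosedUnderExtensions C

/-- `αC = {X ∈ C ∣ every morphism f : C' ⟶ X with C' ∈ C has ker f ∈ C}`. -/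
def alphaSub (C : Set A) : Set A :=
  {X | X ∈ C ∧ ∀ ⦃C' : A⦄ (f : C' ⟶ X), C' ∈ C → kernel f ∈ C}

/-- `D` is a torsion class in the full (wide, hence abelian) subcategory `W` of `A`:
`D ⊆ W`, and `D` is closed under extensions and quotients inside `W`.
(Here short exact sequences and epimorphisms in the wide subcategory `W` are
exactly those of `A` with terms in `W`.) -/
structure IsTorsionClassIn (W D : Set A) : Prop where
  subset : D ⊆ W
  subcat : IsSubcat D
  ext : ∀ (S : ShortComplex A), S.ShortExact → S.X₁ ∈ D → S.X₃ ∈ D → S.X₂ ∈ D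
  quot : ∀ ⦃X Y : A⦄ (f : X ⟶ Y), Epi f → X ∈ D → Y ∈ W → Y ∈ D

/-- The exactness condition defining narrow sequences: for every exact sequence
`A → B → C → D → E` with `A ∈ C(k−1)`, `B, D ∈ C(k)` and `E ∈ C(k+1)` one has `C ∈ C(k)`. -/
def NarrowCondition (C : ℤ → Set A) : Prop :=
  ∀ (k : ℤ) (S : ComposableArrows A 4), S.Exact →
    S.obj' 0 ∈ C (k - 1) → S.obj' 1 ∈ C k → S.obj' 3 ∈ C k → S.obj' 4 ∈ C (k + 1) →
    S.obj' 2 ∈ C k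

/-- A narrow sequence in `A`. -/
structure IsNarrowSequence (C : ℤ → Set A) : Prop where
  subcat : ∀ k, IsSubcat (C k)
  decreasing : ∀ k, C (k + 1) ⊆ C k
  narrow : NarrowCondition C

/-- An ICE sequence in `A`. -/
structure IsICESequence (C : ℤ → Set A) : Prop where
  ice : ∀ k, IsICEClosed (C k)
  tors : ∀ k, IsTorsionClassIn (alphaSub (C k)) (C (k + 1))

/-- The zero subcategory. -/
def zeroSubcat : Set A := {X | IsZero X}


end AbelianPart


section Approximations

variable {C : Type*} [Category C]

/-- A subcategory `B` (given by its class of objects) of a category is contravariantly finite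
if every object admits a right `B`-approximation. -/
def ContravariantlyFinite (B : Set C) : Prop :=
  ∀ X : C, ∃ (B₀ : C) (_ : B₀ ∈ B) (f : B₀ ⟶ X),
    ∀ (B' : C) (_ : B' ∈ B) (g : B' ⟶ X), ∃ h : B' ⟶ B₀, h ≫ f = g

/-- Dually, `B` is covariantly finite if every object admits a left `B`-approximation. -/
def CovariantlyFinite (B : Set C) : Prop :=
  ∀ X : C, ∃ (B₀ : C) (_ : B₀ ∈ B) (f : X ⟶ B₀),
    ∀ (B' : C) (_ : B' ∈ B) (g : X ⟶ B'), ∃ h : B₀ ⟶ B', f ≫ h = g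

end Approximations

open Pretriangulated Triangulated

variable {D : Type*} [Category D] [Preadditive D] [HasZeroObject D] [HasShift D ℤ]
  [∀ n : ℤ, (shiftFunctor D n).Additive] [Pretriangulated D]

/-- The shifted subcategory `U[k] = {X ∣ X⟦-k⟧ ∈ U}`. -/
def shiftSet (U : Set D) (k : ℤ) : Set D := {X : D | X⟦(-k)⟧ ∈ U}

/-- A preaisle: a subcategory (full, iso-closed, containing `0`) closed under extensions and
positive shifts. -/
structure IsPreaisle (U : Set D) : Prop where
  mem_of_iso : ∀ ⦃X Y : D⦄, (X ≅ Y) → X ∈ U → Y ∈ U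
  zero_mem : (0 : D) ∈ U
  ext : ∀ (T : Triangle D), T ∈ (distTriang D) → T.obj₁ ∈ U → T.obj₃ ∈ U → T.obj₂ ∈ U
  shift : ∀ ⦃X : D⦄, X ∈ U → X⟦(1 : ℤ)⟧ ∈ U

/-- A thick subcategory: a triangulated subcategory closed under direct summands. -/
structure IsThick (E : Set D) : Prop where
  mem_of_iso : ∀ ⦃X Y : D⦄, (X ≅ Y) → X ∈ E → Y ∈ E
  zero_mem : (0 : D) ∈ E
  ext : ∀ (T : Triangle D), T ∈ (distTriang D) → T.obj₁ ∈ E → T.obj₃ ∈ E → T.obj₂ ∈ E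
  shift : ∀ ⦃X : D⦄ (k : ℤ), X ∈ E → X⟦k⟧ ∈ E
  summand : ∀ ⦃X Y : D⦄ (i : X ⟶ Y) (r : Y ⟶ X), i ≫ r = 𝟙 X → Y ∈ E → X ∈ E

variable (t : TStructure D)

/-- `D^{≤n}` as a set of objects. -/
def DLE (n : ℤ) : Set D := {X : D | t.le n X}

/-- `D^{≥n}` as a set of objects. -/
def DGE (n : ℤ) : Set D := {X : D | t.ge n X}

/-- The heart `D^{≤0} ∩ D^{≥0}` of the t-structure, as a set of objects of `D`. -/
def heartSet : Set D := {X : D | t.le 0 X ∧ t.ge 0 X}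

/-- The t-structure `t` is bounded. -/
def BoundedT : Prop := ∀ X : D, (∃ n : ℤ, t.le n X) ∧ (∃ n : ℤ, t.ge n X)

/-- The t-structure `t` is nondegenerate. -/
def NonDegenerateT : Prop :=
  (∀ X : D, (∀ n : ℤ, t.le n X) → IsZero X) ∧ (∀ X : D, (∀ n : ℤ, t.ge n X) → IsZero X)

/-- `U` is an aisle: it is the aisle (`D'^{≤0}`) of some t-structure on `D`. -/
def IsAisle (U : Set D) : Prop := ∃ t' : TStructure D, U = DLE t' 0

/-- Data realizing the heart of the t-structure `t` as an abelian category `A`: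
a fully faithful additive functor `ι : A ⥤ D` with essential image the heart of `t`,
identifying short exact sequences in `A` with distinguished triangles of `D` with all three
objects in the heart, together with the associated cohomological functor `H⁰ : D ⥤ A`
(characterized by being homological, restricting to the identity on the heart, and the
standard vanishing on `D^{≤n}` and `D^{≥n}`). -/
structure HeartData (A : Type*) [Category A] [Abelian A] where
  ι : A ⥤ D
  full : ι.Full
  faithful : ι.Faithful
  additive : ι.Additive
  mem_heart : ∀ Y : A, ι.obj Y ∈ heartSet t
  heart_mem : ∀ X : D, X ∈ heartSet t → ∃ Y : A, Nonempty (ι.obj Y ≅ X)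
  shortExact_iff : ∀ S : ShortComplex A, S.ShortExact ↔
    ∃ h : ι.obj S.X₃ ⟶ (ι.obj S.X₁)⟦(1 : ℤ)⟧,
      Triangle.mk (ι.map S.f) (ι.map S.g) h ∈ distTriang D
  H0 : D ⥤ A
  homological : H0.IsHomological
  H0_additive : H0.Additive
  heartIso : ι ⋙ H0 ≅ 𝟭 A
  LE_vanish : ∀ (X : D) (n k : ℤ), t.le n X → n < k → IsZero (H0.obj (X⟦k⟧))
  GE_vanish : ∀ (X : D) (n k : ℤ), t.ge n X → k < n → IsZero (H0.obj (X⟦k⟧))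

variable {t} {A : Type*} [Category A] [Abelian A] (hd : HeartData t A)

/-- The cohomology `H^k = H⁰ ∘ ⟦k⟧`, on objects. -/
def HeartData.H (k : ℤ) (X : D) : A := hd.H0.obj (X⟦k⟧)

/-- `U ⊆ D` is homology-determined: `X ∈ U` iff `H^k X ∈ U[k]` for all `k ∈ ℤ`. -/
def IsHomDet (U : Set D) : Prop :=
  ∀ X : D, X ∈ U ↔ ∀ k : ℤ, hd.ι.obj (hd.H k X) ∈ shiftSet U k

/-- `H^k U`, the image of `U` under `H^k`, as a subcategory of the heart `A`
(closed under isomorphisms). -/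
def HkSet (U : Set D) (k : ℤ) : Set A := {Y : A | ∃ X ∈ U, Nonempty (Y ≅ hd.H k X)}

/-- `θ(C) = {X ∈ D ∣ H^k X ∈ C(k) for all k ∈ ℤ}`. -/
def thetaSet (C : ℤ → Set A) : Set D := {X : D | ∀ k : ℤ, hd.H k X ∈ C k}

/-- `E ⊆ D` is `H⁰`-stable: `H⁰ X ∈ E` for every `X ∈ E`. -/
def H0Stable (E : Set D) : Prop := ∀ X ∈ E, hd.ι.obj (hd.H 0 X) ∈ E

/-! ### Auxiliary material -/

section AuxAbelian

variable {B : Type*} [Category B] [Abelian B]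

lemma IsSubcat.mem_of_isZero {C : Set B} (hC : IsSubcat C) {X : B} (hX : IsZero X) : X ∈ C :=
  hC.mem_of_iso hX.isoZero.symm hC.zero_mem

/-- The kernel of `pullback.fst` is the kernel of the other leg. -/
noncomputable def kernelPullbackFstIso {X Y Z : B} (φ : X ⟶ Z) (π : Y ⟶ Z) :
    kernel (pullback.fst φ π) ≅ kernel π where
  hom := kernel.lift π (kernel.ι _ ≫ pullback.snd φ π) (by
    rw [Category.assoc, ← pullback.condition, ← Category.assoc, kernel.condition, zero_comp])
  inv := kernel.lift (pullback.fst φ π) (pullback.lift (f := φ) (g := π) 0 (kernel.ι π) (by simp)) (by simp [pullback.lift_fst])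
  hom_inv_id := by
    apply (cancel_mono (kernel.ι (pullback.fst φ π))).1
    simp only [Category.assoc, kernel.lift_ι, Category.id_comp]
    apply pullback.hom_ext
    · simp [kernel.condition, pullback.lift_fst]
    · simp [pullback.lift_snd]
  inv_hom_id := by
    apply (cancel_mono (kernel.ι π)).1
    simp [pullback.lift_snd]

/-- The kernel of `pullback.snd` is the kernel of the other leg. -/
noncomputable def kernelPullbackSndIso {X Y Z : B} (φ : X ⟶ Z) (π : Y ⟶ Z) :
    kernel (pullback.snd φ π) ≅ kernel φ where
  hom := kernel.lift φ (kernel.ι _ ≫ pullback.fst φ π) (by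
    rw [Category.assoc, pullback.condition, ← Category.assoc, kernel.condition, zero_comp])
  inv := kernel.lift (pullback.snd φ π) (pullback.lift (f := φ) (g := π) (kernel.ι φ) 0 (by simp)) (by simp [pullback.lift_snd])
  hom_inv_id := by
    apply (cancel_mono (kernel.ι (pullback.snd φ π))).1
    simp only [Category.assoc, kernel.lift_ι, Category.id_comp]
    apply pullback.hom_ext
    · simp [pullback.lift_fst]
    · simp [kernel.condition, pullback.lift_snd]
  inv_hom_id := by
    apply (cancel_mono (kernel.ι φ)).1
    simp [pullback.lift_fst]

lemma shortExact_kernelSC {X Y : B} (f : X ⟶ Y) [Epi f] :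
    (ShortComplex.mk (kernel.ι f) f (kernel.condition f)).ShortExact :=
  ⟨ShortComplex.exact_of_f_is_kernel _ (kernelIsKernel f)⟩

noncomputable def cokernelIsoOfExact {S : ShortComplex B} (hS : S.Exact) (hepi : Epi S.g) :
    cokernel S.f ≅ S.X₃ :=
  haveI := hepi
  IsColimit.coconePointUniqueUpToIso (cokernelIsCokernel S.f) hS.gIsCokernel

noncomputable def kernelIsoOfExact {S : ShortComplex B} (hS : S.Exact) (hmono : Mono S.f) :
    S.X₁ ≅ kernel S.g :=
  haveI := hmono
  IsLimit.conePointUniqueUpToIso hS.fIsKernel (limit.isLimit _)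

attribute [local instance] CategoryTheory.Abelian.Pseudoelement.objectToSort
  CategoryTheory.Abelian.Pseudoelement.homToFun

open CategoryTheory.Abelian

/-- The key abelian-category argument: ICE sequences are "narrow". -/
lemma narrow_of_ICE {C₀ C₁ C₂ : Set B}
    (h₀ : IsICEClosed C₀) (h₁ : IsICEClosed C₁)
    (t₁ : IsTorsionClassIn (alphaSub C₀) C₁) (t₂ : IsTorsionClassIn (alphaSub C₁) C₂)
    (S : ComposableArrows B 4) (hS : S.Exact)
    (m0 : S.obj' 0 ∈ C₀) (m1 : S.obj' 1 ∈ C₁) (m3 : S.obj' 3 ∈ C₁) (m4 : S.obj' 4 ∈ C₂) :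
    S.obj' 2 ∈ C₁ := by
  have hC₁₀ : C₁ ⊆ C₀ := fun _ h => (t₁.subset h).1
  set f := S.map' 0 1 with hfdef
  set g := S.map' 1 2 with hgdef
  set h := S.map' 2 3 with hhdef
  set i := S.map' 3 4 with hidef
  -- step 1 : kernel i ∈ C₁
  have hkeri : kernel i ∈ C₁ := (t₂.subset m4).2 i m3
  -- step 2 : cokernel f ∈ C₁
  have him : image f ∈ C₀ := h₀.im f m0 (hC₁₀ m1)
  have hQ₀ : cokernel f ∈ C₀ := h₀.coker f m0 (hC₁₀ m1)
  have hQα : cokernel f ∈ alphaSub C₀ := by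
    refine ⟨hQ₀, fun C' φ hC' => ?_⟩
    have hkπ : kernel (cokernel.π f) ∈ C₀ :=
      h₀.subcat.mem_of_iso (Abelian.imageIsoImage f).symm him
    have hkfst : kernel (pullback.fst φ (cokernel.π f)) ∈ C₀ :=
      h₀.subcat.mem_of_iso (kernelPullbackFstIso φ (cokernel.π f)).symm hkπ
    have hP : pullback φ (cokernel.π f) ∈ C₀ :=
      h₀.ext _ (shortExact_kernelSC (pullback.fst φ (cokernel.π f))) hkfst hC'
    have hksnd : kernel (pullback.snd φ (cokernel.π f)) ∈ C₀ :=
      (t₁.subset m1).2 (pullback.snd φ (cokernel.π f)) hP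
    exact h₀.subcat.mem_of_iso (kernelPullbackSndIso φ (cokernel.π f)) hksnd
  have hQ₁ : cokernel f ∈ C₁ := t₁.quot (cokernel.π f) inferInstance m1 hQα
  -- step 3 : the middle short exact sequence
  have w01 : f ≫ g = 0 := hS.toIsComplex.zero 0
  have w12 : g ≫ h = 0 := hS.toIsComplex.zero 1
  have w23 : h ≫ i = 0 := hS.toIsComplex.zero 2
  set u : cokernel f ⟶ S.obj' 2 := cokernel.desc f g w01 with hudef
  set v : S.obj' 2 ⟶ kernel i := kernel.lift i h w23 with hvdef
  have hπu : cokernel.π f ≫ u = g := cokernel.π_desc f g w01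
  have hvι : v ≫ kernel.ι i = h := kernel.lift_ι i h w23
  have wuv : u ≫ v = 0 := by
    rw [← cancel_epi (cokernel.π f), ← cancel_mono (kernel.ι i)]
    rw [Category.assoc, Category.assoc, hvι, ← Category.assoc, hπu, w12]
    simp
  have ex1 := hS.exact' 0 1 2
  have ex2 := hS.exact' 1 2 3
  have ex3 := hS.exact' 2 3 4
  haveI hmono : Mono u := by
    apply Pseudoelement.mono_of_zero_of_map_zero
    intro a ha
    obtain ⟨b, rfl⟩ := Pseudoelement.pseudo_surjective_of_epi (cokernel.π f) a
    have hgb : g b = 0 := by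
      rw [← hπu, Pseudoelement.comp_apply]; exact ha
    obtain ⟨c, hc⟩ := Pseudoelement.pseudo_exact_of_exact ex1 b hgb
    rw [← hc, ← Pseudoelement.comp_apply, cokernel.condition]
    exact Pseudoelement.zero_apply _ c
  haveI hepi : Epi v := by
    apply Pseudoelement.epi_of_pseudo_surjective
    intro d
    have hd0 : i (kernel.ι i d) = 0 := by
      rw [← Pseudoelement.comp_apply, kernel.condition]
      exact Pseudoelement.zero_apply _ d
    obtain ⟨x, hx⟩ := Pseudoelement.pseudo_exact_of_exact ex3 (kernel.ι i d) hd0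
    refine ⟨x, Pseudoelement.pseudo_injective_of_mono (kernel.ι i) ?_⟩
    rw [← Pseudoelement.comp_apply, hvι, hx]
  have hSE : (ShortComplex.mk u v wuv).ShortExact := by
    refine ⟨Pseudoelement.exact_of_pseudo_exact _ ?_⟩
    intro x hx
    have hhx : h x = 0 := by
      rw [← hvι, Pseudoelement.comp_apply, hx]
      exact Pseudoelement.apply_zero _
    obtain ⟨b, hb⟩ := Pseudoelement.pseudo_exact_of_exact ex2 x hhx
    refine ⟨cokernel.π f b, ?_⟩
    rw [← Pseudoelement.comp_apply, hπu, hb]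
  exact h₁.ext _ hSE hQ₁ hkeri

end AuxAbelian
section AuxTriangulated

open Pretriangulated Triangulated

lemma antitone_of_decreasing {α : Type*} {C : ℤ → Set α} (hdec : ∀ k, C (k + 1) ⊆ C k)
    {j k : ℤ} (hjk : j ≤ k) : C k ⊆ C j := by
  obtain ⟨d, rfl⟩ := Int.le.dest hjk
  clear hjk
  induction d with
  | zero => simpa using subset_rfl
  | succ d ih =>
      have h1 : C (j + (↑(d + 1))) ⊆ C (j + d) := by
        have := hdec (j + d)
        rwa [show (j + (d : ℤ)) + 1 = j + (↑(d + 1)) by push_cast; ring] at this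
      exact h1.trans ih

lemma isZero_of_id_eq_zero {X : D} (h : 𝟙 X = 0) : IsZero X := (IsZero.iff_id_eq_zero X).2 h

lemma IsPreaisle.mem_of_isZero {U : Set D} (hU : IsPreaisle U) {X : D} (hX : IsZero X) : X ∈ U :=
  hU.mem_of_iso hX.isoZero.symm hU.zero_mem

noncomputable def shiftShiftIso (X : D) (a b c : ℤ) (h : a + b = c) : (X⟦a⟧)⟦b⟧ ≅ X⟦c⟧ :=
  ((shiftFunctorAdd' D a b c h).app X).symm

lemma zero_of_LE_GE {X Y : D} {n : ℤ} (f : X ⟶ Y) (hX : t.le n X) (hY : t.ge (n + 1) Y) :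
    f = 0 := by
  have h := t.zero' ((shiftFunctor D n).map f)
    (t.le_shift n n 0 (by omega) X hX) (t.ge_shift (n + 1) n 1 (by omega) Y hY)
  apply (shiftFunctor D n).map_injective
  rw [h, Functor.map_zero]

lemma LE_ext (T : Triangle D) (hT : T ∈ distTriang D) {n : ℤ}
    (h₁ : t.le n T.obj₁) (h₃ : t.le n T.obj₃) : t.le n T.obj₂ := by
  obtain ⟨X', X'', hX', hX'', a, b, c, hTr⟩ := t.exists_triangle T.obj₂ n (n + 1) rfl
  have hb : b = 0 := by
    obtain ⟨g', hg'⟩ := Triangle.yoneda_exact₂ T hT b (zero_of_LE_GE (T.mor₁ ≫ b) h₁ hX'')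
    rw [hg', zero_of_LE_GE g' h₃ hX'', comp_zero]
  obtain ⟨g, hg⟩ := Triangle.yoneda_exact₃ _ hTr (𝟙 X'') (by
    exact (Category.comp_id _).trans hb)
  have hz : IsZero X'' := by
    apply isZero_of_id_eq_zero
    have hg1 : t.le n (X'⟦(1 : ℤ)⟧) := t.le_monotone (show n - 1 ≤ n by omega) _
      (t.le_shift n 1 (n - 1) (by omega) X' hX')
    rw [hg, zero_of_LE_GE g hg1 hX'', comp_zero]
    rfl
  have : IsIso a := (Triangle.isZero₃_iff_isIso₁ _ hTr).1 hz
  exact ((t.le n).prop_iff_of_iso (asIso a)).1 hX'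

lemma GE_ext (T : Triangle D) (hT : T ∈ distTriang D) {n : ℤ}
    (h₁ : t.ge n T.obj₁) (h₃ : t.ge n T.obj₃) : t.ge n T.obj₂ := by
  obtain ⟨X', X'', hX', hX'', a, b, c, hTr⟩ := t.exists_triangle T.obj₂ (n - 1) n (by omega)
  have hGE3 : t.ge (n - 1 + 1) T.obj₃ := by rw [show n - 1 + 1 = n by omega]; exact h₃
  have hGE1 : t.ge (n - 1 + 1) T.obj₁ := by rw [show n - 1 + 1 = n by omega]; exact h₁
  have ha : a = 0 := by
    obtain ⟨g', hg'⟩ := Triangle.coyoneda_exact₂ T hT a (zero_of_LE_GE _ hX' hGE3)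
    rw [hg', zero_of_LE_GE g' hX' hGE1, zero_comp]
  have hIR := inv_rot_of_distTriang _ hTr
  obtain ⟨g, hg⟩ := Triangle.coyoneda_exact₂ _ hIR (𝟙 X') (by
    exact (Category.id_comp _).trans ha)
  have hgz : g = 0 := by
    have hsh : t.ge (n - 1 + 1) (X''⟦(-1 : ℤ)⟧) :=
      t.ge_antitone (show (n - 1 + 1 : ℤ) ≤ n + 1 by omega) _
        (t.ge_shift n (-1) (n + 1) (by omega) X'' hX'')
    exact zero_of_LE_GE g hX' hsh
  have hz : IsZero X' := isZero_of_id_eq_zero (by rw [hg, hgz, zero_comp]; rfl)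
  have : IsIso b := (Triangle.isZero₁_iff_isIso₂ _ hTr).1 hz
  exact ((t.ge n).prop_iff_of_iso (asIso b)).2 hX''

/-- `H^j (X⟦m⟧) ≅ H^r X` when `m + j = r`. -/
noncomputable def HshiftIso (m j r : ℤ) (h : m + j = r) (X : D) :
    hd.H j (X⟦m⟧) ≅ hd.H r X :=
  hd.H0.mapIso (((shiftFunctorAdd' D m j r h).app X).symm)

noncomputable def HmapIso {X Y : D} (e : X ≅ Y) (k : ℤ) : hd.H k X ≅ hd.H k Y :=
  hd.H0.mapIso ((shiftFunctor D k).mapIso e)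

noncomputable def conjIso (k : ℤ) :
    hd.ι ⋙ shiftFunctor D (-k) ⋙ shiftFunctor D k ⋙ hd.H0 ≅ 𝟭 A :=
  Functor.isoWhiskerLeft hd.ι ((Functor.associator _ _ _).symm ≪≫
    Functor.isoWhiskerRight (shiftFunctorCompIsoId D (-k) k (by omega)) hd.H0 ≪≫
    Functor.leftUnitor hd.H0) ≪≫ hd.heartIso

noncomputable def conjApp (k : ℤ) (Y : A) :
    hd.H k ((hd.ι.obj Y)⟦(-k)⟧) ≅ Y := (conjIso hd k).app Y

lemma conjApp_naturality (k : ℤ) {Y₁ Y₂ : A} (f : Y₁ ⟶ Y₂) :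
    hd.H0.map (((hd.ι.map f)⟦(-k)⟧')⟦k⟧') ≫ (conjApp hd k Y₂).hom =
      (conjApp hd k Y₁).hom ≫ f := by
  exact (conjIso hd k).hom.naturality f

lemma conjApp_inv_naturality (k : ℤ) {Y₁ Y₂ : A} (f : Y₁ ⟶ Y₂) :
    f ≫ (conjApp hd k Y₂).inv =
      (conjApp hd k Y₁).inv ≫ hd.H0.map (((hd.ι.map f)⟦(-k)⟧')⟦k⟧') := by
  exact (conjIso hd k).inv.naturality f

lemma isZero_H_heart_shift (Y : A) {m j : ℤ} (h : m + j ≠ 0) :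
    IsZero (hd.H j ((hd.ι.obj Y)⟦m⟧)) := by
  refine IsZero.of_iso ?_ (HshiftIso hd m j (m + j) rfl (hd.ι.obj Y))
  rcases h.lt_or_gt with hlt | hlt
  · exact hd.GE_vanish (hd.ι.obj Y) 0 (m + j) (hd.mem_heart Y).2 hlt
  · exact hd.LE_vanish (hd.ι.obj Y) 0 (m + j) (hd.mem_heart Y).1 hlt

lemma isZero_H_of_isZero {X : D} (hX : IsZero X) (k : ℤ) : IsZero (hd.H k X) := by
  haveI := hd.H0_additive
  exact hd.H0.map_isZero ((shiftFunctor D k).map_isZero hX)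

lemma heart_shift_mem_theta_iff {C : ℤ → Set A} (hC : ∀ k, IsSubcat (C k)) (Y : A) (k : ℤ) :
    (hd.ι.obj Y)⟦(-k)⟧ ∈ thetaSet hd C ↔ Y ∈ C k := by
  constructor
  · intro hmem
    exact (hC k).mem_of_iso (conjApp hd k Y) (hmem k)
  · intro hY j
    by_cases hj : j = k
    · subst hj
      exact (hC j).mem_of_iso (conjApp hd j Y).symm hY
    · exact (hC j).mem_of_isZero (isZero_H_heart_shift hd Y (by omega))

lemma isHomDet_theta {C : ℤ → Set A} (hC : ∀ k, IsSubcat (C k)) :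
    IsHomDet hd (thetaSet hd C) := fun X =>
  ⟨fun hX k => (heart_shift_mem_theta_iff hd hC _ k).2 (hX k),
   fun hX k => (heart_shift_mem_theta_iff hd hC _ k).1 (hX k)⟩

/-- The inverse of `θ`. -/
def rSetAux (U : Set D) (k : ℤ) : Set A := {Y : A | (hd.ι.obj Y)⟦(-k)⟧ ∈ U}

lemma thetaSet_rSetAux {U : Set D} (hdet : IsHomDet hd U) : thetaSet hd (rSetAux hd U) = U := by
  ext X
  exact ⟨fun h => (hdet X).2 h, fun h => (hdet X).1 h⟩

lemma rSetAux_thetaSet {C : ℤ → Set A} (hC : ∀ k, IsSubcat (C k)) :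
    rSetAux hd (thetaSet hd C) = C := by
  funext k
  ext Y
  exact heart_shift_mem_theta_iff hd hC Y k

end AuxTriangulated
section AuxMain

open Pretriangulated Triangulated

lemma isPreaisle_theta {C : ℤ → Set A} (hC : IsICESequence C) :
    IsPreaisle (thetaSet hd C) := by
  have hsub : ∀ k, IsSubcat (C k) := fun k => (hC.ice k).subcat
  have hdec : ∀ k, C (k + 1) ⊆ C k := fun k _ hy => ((hC.tors k).subset hy).1
  constructor
  · intro X Y e hX k
    exact (hsub k).mem_of_iso (HmapIso hd e k) (hX k)
  · intro k
    exact (hsub k).mem_of_isZero (isZero_H_of_isZero hd (isZero_zero D) k)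
  · intro T hT h₁ h₃ k
    letI : hd.H0.ShiftSequence ℤ := Functor.ShiftSequence.tautological _ _
    haveI := hd.homological
    have e1 := hd.H0.homologySequence_exact₁ T hT (k - 1) k (by omega)
    have e2 := hd.H0.homologySequence_exact₂ T hT k
    have e3 := hd.H0.homologySequence_exact₃ T hT k (k + 1) rfl
    have hex : (ComposableArrows.mk₄ (hd.H0.homologySequenceδ T (k - 1) k (by omega))
        ((hd.H0.shift k).map T.mor₁) ((hd.H0.shift k).map T.mor₂)
        (hd.H0.homologySequenceδ T k (k + 1) rfl)).Exact :=
      ComposableArrows.exact_of_δ₀ e1.exact_toComposableArrows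
        (ComposableArrows.exact_of_δ₀ e2.exact_toComposableArrows
          e3.exact_toComposableArrows)
    have t₁ : IsTorsionClassIn (alphaSub (C (k - 1))) (C k) := by
      have h' := hC.tors (k - 1)
      rwa [show k - 1 + 1 = k by omega] at h'
    exact narrow_of_ICE (hC.ice (k - 1)) (hC.ice k) t₁ (hC.tors k) _ hex
      (h₃ (k - 1)) (h₁ k) (h₃ k) (h₁ (k + 1))
  · intro X hX k
    have e := HshiftIso hd 1 k (k + 1) (by omega) X
    exact (hsub k).mem_of_iso e.symm (hdec k (hX (k + 1)))

lemma cone_mem {U : Set D} (hU : IsPreaisle U) (hdet : IsHomDet hd U)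
    {k' k : ℤ} (hk : k' + 1 = k) {Y₁ Y₂ : A} (f : Y₁ ⟶ Y₂)
    (h₁ : Y₁ ∈ rSetAux hd U k') (h₂ : Y₂ ∈ rSetAux hd U k) :
    cokernel f ∈ rSetAux hd U k ∧ kernel f ∈ rSetAux hd U k' := by
  letI : hd.H0.ShiftSequence ℤ := Functor.ShiftSequence.tautological _ _
  haveI := hd.homological
  obtain ⟨Z, w₂, w₃, hT⟩ :=
    Pretriangulated.distinguished_cocone_triangle ((shiftFunctor D (-k)).map (hd.ι.map f))
  set T := Triangle.mk ((shiftFunctor D (-k)).map (hd.ι.map f)) w₂ w₃ with hTdef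
  have hZ : Z ∈ U := by
    refine hU.ext T.rotate (rot_of_distTriang T hT) h₂ ?_
    exact hU.mem_of_iso (shiftShiftIso (hd.ι.obj Y₁) (-k) 1 (-k') (by omega)).symm h₁
  have hH := (hdet Z).1 hZ
  constructor
  · -- cokernel part
    have hzero1 : IsZero ((hd.H0.shift (k + 1)).obj T.obj₁) :=
      isZero_H_heart_shift hd Y₁ (show -k + (k + 1) ≠ 0 by omega)
    have e2 := hd.H0.homologySequence_exact₂ T hT k
    have e3 := hd.H0.homologySequence_exact₃ T hT k (k + 1) rfl
    have hepi : Epi ((hd.H0.shift k).map T.mor₂) := by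
      rw [e3.epi_f_iff]
      exact IsZero.eq_of_tgt hzero1 _ _
    have ecok : cokernel f ≅ (hd.H0.shift k).obj T.obj₃ :=
      (cokernel.mapIso f ((hd.H0.shift k).map T.mor₁) (conjApp hd k Y₁).symm
        (conjApp hd k Y₂).symm (conjApp_inv_naturality hd k f)) ≪≫ cokernelIsoOfExact e2 hepi
    exact hU.mem_of_iso ((shiftFunctor D (-k)).mapIso (hd.ι.mapIso ecok.symm)) (hH k)
  · -- kernel part
    have hzero2 : IsZero ((hd.H0.shift k').obj T.obj₂) :=
      isZero_H_heart_shift hd Y₂ (show -k + k' ≠ 0 by omega)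
    have e1 := hd.H0.homologySequence_exact₁ T hT k' k hk
    have e3' := hd.H0.homologySequence_exact₃ T hT k' k hk
    have hmono : Mono (hd.H0.homologySequenceδ T k' k hk) := by
      rw [e3'.mono_g_iff]
      exact IsZero.eq_of_src hzero2 _ _
    have eker : kernel f ≅ (hd.H0.shift k').obj T.obj₃ :=
      (kernel.mapIso ((hd.H0.shift k).map T.mor₁) f (conjApp hd k Y₁)
        (conjApp hd k Y₂) (conjApp_naturality hd k f)).symm ≪≫
        (kernelIsoOfExact e1 hmono).symm
    exact hU.mem_of_iso ((shiftFunctor D (-k')).mapIso (hd.ι.mapIso eker.symm)) (hH k')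

lemma rSetAux_decreasing {U : Set D} (hU : IsPreaisle U) (k : ℤ) :
    rSetAux hd U (k + 1) ⊆ rSetAux hd U k := by
  intro Y h
  exact hU.mem_of_iso (shiftShiftIso (hd.ι.obj Y) (-(k + 1)) 1 (-k) (by omega)) (hU.shift h)

lemma rSetAux_ext {U : Set D} (hU : IsPreaisle U) (k : ℤ) (S : ShortComplex A)
    (hSE : S.ShortExact) (h₁ : S.X₁ ∈ rSetAux hd U k) (h₃ : S.X₃ ∈ rSetAux hd U k) :
    S.X₂ ∈ rSetAux hd U k := by
  obtain ⟨h, hT⟩ := (hd.shortExact_iff S).1 hSE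
  exact hU.ext _ (Pretriangulated.Triangle.shift_distinguished _ hT (-k)) h₁ h₃

lemma rSetAux_subcat {U : Set D} (hU : IsPreaisle U) (k : ℤ) : IsSubcat (rSetAux hd U k) := by
  haveI := hd.additive
  constructor
  · intro X Y e h
    exact hU.mem_of_iso ((shiftFunctor D (-k)).mapIso (hd.ι.mapIso e)) h
  · exact hU.mem_of_isZero ((shiftFunctor D (-k)).map_isZero (hd.ι.map_isZero (isZero_zero A)))
  · intro X Y hX hY
    exact rSetAux_ext hd hU k _ (ShortComplex.Splitting.ofHasBinaryBiproduct X Y).shortExact hX hY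

lemma rSetAux_isICESequence {U : Set D} (hU : IsPreaisle U) (hdet : IsHomDet hd U) :
    IsICESequence (rSetAux hd U) := by
  constructor
  · intro k
    refine ⟨rSetAux_subcat hd hU k, ?_, ?_, fun S hS h1 h3 => rSetAux_ext hd hU k S hS h1 h3⟩
    · intro X Y f hX hY
      have hX' : X ∈ rSetAux hd U (k - 1) := by
        apply rSetAux_decreasing hd hU (k - 1)
        rwa [show k - 1 + 1 = k by omega]
      have hker : kernel f ∈ rSetAux hd U (k - 1) :=
        (cone_mem hd hU hdet (show k - 1 + 1 = k by omega) f hX' hY).2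
      have hcoker : cokernel (kernel.ι f) ∈ rSetAux hd U k :=
        (cone_mem hd hU hdet (show k - 1 + 1 = k by omega) (kernel.ι f) hker hX).1
      exact (rSetAux_subcat hd hU k).mem_of_iso (Abelian.coimageIsoImage' f) hcoker
    · intro X Y f hX hY
      have hX' : X ∈ rSetAux hd U (k - 1) := by
        apply rSetAux_decreasing hd hU (k - 1)
        rwa [show k - 1 + 1 = k by omega]
      exact (cone_mem hd hU hdet (show k - 1 + 1 = k by omega) f hX' hY).1
  · intro k
    constructor
    · intro Y hY
      exact ⟨rSetAux_decreasing hd hU k hY,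
        fun C' g hC' => (cone_mem hd hU hdet rfl g hC' hY).2⟩
    · exact rSetAux_subcat hd hU (k + 1)
    · exact fun S hS h1 h3 => rSetAux_ext hd hU (k + 1) S hS h1 h3
    · intro X Y g hg hX hYα
      have hkg : kernel g ∈ rSetAux hd U k := hYα.2 g (rSetAux_decreasing hd hU k hX)
      have hcok : cokernel (kernel.ι g) ∈ rSetAux hd U (k + 1) :=
        (cone_mem hd hU hdet rfl (kernel.ι g) hkg hX).1
      haveI : Epi (Limits.factorThruImage g ≫ Limits.image.ι g) := by
        rw [Limits.image.fac]; exact hg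
      haveI : Epi (Limits.image.ι g) := epi_of_epi (Limits.factorThruImage g) _
      haveI : IsIso (Limits.image.ι g) := isIso_of_mono_of_epi _
      exact (rSetAux_subcat hd hU (k + 1)).mem_of_iso
        (Abelian.coimageIsoImage' g ≪≫ asIso (Limits.image.ι g)) hcok

lemma rSetAux_one_eq_zero {U : Set D} (hU : IsPreaisle U) (hUle : U ⊆ DLE t 0) :
    rSetAux hd U 1 = zeroSubcat := by
  ext Y
  constructor
  · intro hY
    have hle : t.le 0 ((hd.ι.obj Y)⟦(-1 : ℤ)⟧) := hUle hY
    have hle' : t.le (-1) (hd.ι.obj Y) :=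
      ((t.le (-1)).prop_iff_of_iso (shiftShiftIso (hd.ι.obj Y) (-1) 1 0 (by omega) ≪≫
        (shiftFunctorZero D ℤ).app _)).1 (t.le_shift 0 1 (-1) (by omega) _ hle)
    have hge : t.ge (-1 + 1) (hd.ι.obj Y) := by
      rw [show (-1 : ℤ) + 1 = 0 by omega]
      exact (hd.mem_heart Y).2
    have hzD : IsZero (hd.ι.obj Y) := isZero_of_id_eq_zero (zero_of_LE_GE _ hle' hge)
    haveI := hd.H0_additive
    exact IsZero.of_iso (hd.H0.map_isZero hzD) (hd.heartIso.app Y).symm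
  · intro hY
    haveI := hd.additive
    exact hU.mem_of_isZero ((shiftFunctor D (-1 : ℤ)).map_isZero (hd.ι.map_isZero hY))

lemma rSetAux_all {U : Set D} {a : ℤ} (hUge : DLE t a ⊆ U) : rSetAux hd U a = Set.univ := by
  ext Y
  simp only [Set.mem_univ, iff_true]
  exact hUge (t.le_shift 0 (-a) a (by omega) _ (hd.mem_heart Y).1)

lemma isZero_of_LE_GE_H (Z : D) (m : ℤ) (hL : t.le m Z) (hG : t.ge m Z)
    (h : IsZero (hd.H m Z)) : IsZero Z := by
  obtain ⟨W, ⟨e⟩⟩ := hd.heart_mem (Z⟦m⟧)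
    ⟨t.le_shift m m 0 (by omega) Z hL, t.ge_shift m m 0 (by omega) Z hG⟩
  haveI := hd.additive
  have hW : IsZero W :=
    IsZero.of_iso (IsZero.of_iso h (hd.H0.mapIso e)) (hd.heartIso.app W).symm
  have hZm : IsZero (Z⟦m⟧) := IsZero.of_iso (hd.ι.map_isZero hW) e.symm
  have h2 : IsZero ((Z⟦m⟧)⟦(-m : ℤ)⟧) := (shiftFunctor D (-m)).map_isZero hZm
  exact IsZero.of_iso h2
    (shiftShiftIso Z m (-m) 0 (by omega) ≪≫ (shiftFunctorZero D ℤ).app Z).symm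

lemma isZero_of_GE_allH (hnd : NonDegenerateT t) (Y : D) (m : ℤ) (hG : t.ge m Y)
    (hH : ∀ k : ℤ, IsZero (hd.H k Y)) : IsZero Y := by
  letI : hd.H0.ShiftSequence ℤ := Functor.ShiftSequence.tautological _ _
  haveI := hd.homological
  have key : ∀ j : ℕ, t.ge (m + j) Y := by
    intro j
    induction j with
    | zero => simpa using hG
    | succ j ih =>
      obtain ⟨Y', Y'', hL', hG'', a, b, c, hTr⟩ :=
        t.exists_triangle Y (m + j) (m + j + 1) rfl
      have hY'ge : t.ge (m + j) Y' := by
        refine GE_ext _ (inv_rot_of_distTriang _ hTr) ?_ ih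
        exact t.ge_antitone (show (m + j : ℤ) ≤ m + j + 2 by omega) _
          (t.ge_shift (m + j + 1) (-1) (m + j + 2) (by omega) Y'' hG'')
      have e1 := hd.H0.homologySequence_exact₁ (Triangle.mk a b c) hTr (m + j - 1) (m + j)
        (by omega)
      have hz : IsZero ((hd.H0.shift (m + (j : ℤ))).obj (Triangle.mk a b c).obj₁) := by
        rw [e1.isZero_X₂_iff]
        exact ⟨IsZero.eq_of_src (hd.GE_vanish Y'' (m + j + 1) (m + j - 1) hG'' (by omega)) _ _,
          IsZero.eq_of_tgt (hH (m + j)) _ _⟩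
      have hzY' : IsZero Y' := isZero_of_LE_GE_H hd Y' (m + j) hL' hY'ge hz
      have hb : IsIso b := (Triangle.isZero₁_iff_isIso₂ _ hTr).1 hzY'
      have hge : t.ge (m + j + 1) Y := ((t.ge (m + j + 1)).prop_iff_of_iso (asIso b)).2 hG''
      rw [show (m + ((j + 1 : ℕ) : ℤ)) = m + ↑j + 1 by push_cast; ring]
      exact hge
  apply hnd.2
  intro r
  rcases le_or_gt r m with h | h
  · exact t.ge_antitone h _ hG
  · have h2 := key (r - m).toNat
    rwa [show m + ((r - m).toNat : ℤ) = r by omega] at h2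

lemma isZero_of_LE_allH (hnd : NonDegenerateT t) (Y : D) (m : ℤ) (hL : t.le m Y)
    (hH : ∀ k : ℤ, IsZero (hd.H k Y)) : IsZero Y := by
  letI : hd.H0.ShiftSequence ℤ := Functor.ShiftSequence.tautological _ _
  haveI := hd.homological
  have key : ∀ j : ℕ, t.le (m - j) Y := by
    intro j
    induction j with
    | zero => simpa using hL
    | succ j ih =>
      obtain ⟨Y', Y'', hL', hG'', a, b, c, hTr⟩ :=
        t.exists_triangle Y (m - j - 1) (m - j) (by omega)
      have hY''le : t.le (m - j) Y'' := by
        refine LE_ext _ (rot_of_distTriang _ hTr) ih ?_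
        exact t.le_monotone (show (m - j - 2 : ℤ) ≤ m - j by omega) _
          (t.le_shift (m - j - 1) 1 (m - j - 2) (by omega) Y' hL')
      have e3 := hd.H0.homologySequence_exact₃ (Triangle.mk a b c) hTr (m - j) (m - j + 1) rfl
      have hz : IsZero ((hd.H0.shift (m - (j : ℤ))).obj (Triangle.mk a b c).obj₃) := by
        rw [e3.isZero_X₂_iff]
        exact ⟨IsZero.eq_of_src (hH (m - j)) _ _,
          IsZero.eq_of_tgt (hd.LE_vanish Y' (m - j - 1) (m - j + 1) hL' (by omega)) _ _⟩
      have hzY'' : IsZero Y'' := isZero_of_LE_GE_H hd Y'' (m - j) hY''le hG'' hz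
      have ha : IsIso a := (Triangle.isZero₃_iff_isIso₁ _ hTr).1 hzY''
      have hle : t.le (m - j - 1) Y := ((t.le (m - j - 1)).prop_iff_of_iso (asIso a)).1 hL'
      rw [show (m - ((j + 1 : ℕ) : ℤ)) = m - ↑j - 1 by push_cast; ring]
      exact hle
  apply hnd.1
  intro r
  rcases le_or_gt m r with h | h
  · exact t.le_monotone h _ hL
  · have h2 := key (m - r).toNat
    rwa [show m - ((m - r).toNat : ℤ) = r by omega] at h2

lemma LE_zero_of_highH_zero (hnd : NonDegenerateT t) {X : D}
    (hH : ∀ k : ℤ, 0 < k → IsZero (hd.H k X)) : t.le 0 X := by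
  letI : hd.H0.ShiftSequence ℤ := Functor.ShiftSequence.tautological _ _
  haveI := hd.homological
  obtain ⟨X', X'', hL, hG, a, b, c, hTr⟩ := t.exists_triangle X 0 1 rfl
  have hz : IsZero X'' := by
    apply isZero_of_GE_allH hd hnd X'' 1 hG
    intro k
    rcases lt_or_ge k 1 with hk | hk
    · exact hd.GE_vanish X'' 1 k hG hk
    · have e3 := hd.H0.homologySequence_exact₃ (Triangle.mk a b c) hTr k (k + 1) rfl
      have hz2 : IsZero ((hd.H0.shift k).obj (Triangle.mk a b c).obj₃) := by
        rw [e3.isZero_X₂_iff]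
        exact ⟨IsZero.eq_of_src (hH k (by omega)) _ _,
          IsZero.eq_of_tgt (hd.LE_vanish X' 0 (k + 1) hL (by omega)) _ _⟩
      exact hz2
  have ha : IsIso a := (Triangle.isZero₃_iff_isIso₁ _ hTr).1 hz
  exact ((t.le 0).prop_iff_of_iso (asIso a)).1 hL

end AuxMain
/-- **Corollary.** Suppose the t-structure is nondegenerate and let `n` be a positive integer.
Then `θ` restricts to a bijection between ICE sequences in the heart `H` of length `n`
(i.e. `C(1) = 0` and `C(-n+1) = H`) and `n`-intermediate homology-determined preaisles in `D`
(i.e. `D^{≤-n+1} ⊆ U ⊆ D^{≤0}`). -/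
theorem iceSequencesLength_equiv_intermediateHomDetPreaisles
    {D : Type*} [Category D] [Preadditive D] [HasZeroObject D] [HasShift D ℤ]
    [∀ n : ℤ, (shiftFunctor D n).Additive] [Pretriangulated D]
    {t : Triangulated.TStructure D} {A : Type*} [Category A] [Abelian A]
    (hd : HeartData t A) (hnd : NonDegenerateT t) (n : ℕ) (hn : 0 < n) :
    ∃ e : {C : ℤ → Set A // IsICESequence C ∧ C 1 = zeroSubcat ∧
            C (-(n : ℤ) + 1) = Set.univ} ≃
        {U : Set D // IsPreaisle U ∧ IsHomDet hd U ∧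
            DLE t (-(n : ℤ) + 1) ⊆ U ∧ U ⊆ DLE t 0},
      ∀ C, (e C).1 = thetaSet hd C.1 := by
  refine ⟨{
    toFun := fun C => ⟨thetaSet hd C.1, isPreaisle_theta hd C.2.1,
      isHomDet_theta hd (fun k => ((C.2.1).ice k).subcat), ?_, ?_⟩
    invFun := fun U => ⟨rSetAux hd U.1, rSetAux_isICESequence hd U.2.1 U.2.2.1,
      rSetAux_one_eq_zero hd U.2.1 U.2.2.2.2, rSetAux_all hd U.2.2.2.1⟩
    left_inv := fun C => Subtype.ext (rSetAux_thetaSet hd (fun k => ((C.2.1).ice k).subcat))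
    right_inv := fun U => Subtype.ext (thetaSet_rSetAux hd U.2.2.1) }, fun C => rfl⟩
  · -- DLE t (-n+1) ⊆ θ(C)
    obtain ⟨hICE, h1, hn'⟩ := C.2
    have hdec : ∀ k, C.1 (k + 1) ⊆ C.1 k := fun k _ hy => ((hICE.tors k).subset hy).1
    intro X hX k
    rcases le_or_gt k (-(n : ℤ) + 1) with hk | hk
    · refine antitone_of_decreasing hdec hk ?_
      rw [hn']
      trivial
    · exact ((hICE.ice k).subcat).mem_of_isZero (hd.LE_vanish X (-(n : ℤ) + 1) k hX hk)
  · -- θ(C) ⊆ DLE t 0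
    obtain ⟨hICE, h1, hn'⟩ := C.2
    have hdec : ∀ k, C.1 (k + 1) ⊆ C.1 k := fun k _ hy => ((hICE.tors k).subset hy).1
    intro X hX
    apply LE_zero_of_highH_zero hd hnd
    intro k hk
    have h2 := antitone_of_decreasing hdec (show (1 : ℤ) ≤ k by omega) (hX k)
    rwa [h1] at h2

end ICEPaper
end

section
/- If the t-structure (D^{≤0}, D^{≥1}) is nondegenerate, then there is a bijective correspondence between the set of torsion classes in the heart H and the set of intermediate preaisles in D. -/
open CategoryTheory Limits ZeroObject

namespace ICEPaper

open Pretriangulated Triangulated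

variable {D : Type*} [Category D] [Preadditive D] [HasZeroObject D] [HasShift D ℤ]
  [∀ n : ℤ, (shiftFunctor D n).Additive] [Pretriangulated D]

variable (t : TStructure D)

variable {t} {A : Type*} [Category A] [Abelian A] (hd : HeartData t A)

section MainProofAux

variable {D : Type*} [Category D] [Preadditive D] [HasZeroObject D] [HasShift D ℤ]
  [∀ n : ℤ, (shiftFunctor D n).Additive] [Pretriangulated D]
  {t : Triangulated.TStructure D} {A : Type*} [Category A] [Abelian A]

/-- `D^{≤0}` is closed under extensions. -/
lemma aux_LE_ext (t : Triangulated.TStructure D) (T : Triangle D) (hT : T ∈ distTriang D)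
    (h1 : t.le 0 T.obj₁) (h3 : t.le 0 T.obj₃) : t.le 0 T.obj₂ := by
  obtain ⟨P, Q, hP, hQ, f, g, h, mem⟩ := t.exists_triangle_zero_one T.obj₂
  have hg0 : T.mor₁ ≫ g = 0 := t.zero' (T.mor₁ ≫ g) h1 hQ
  obtain ⟨k, hk⟩ := Triangle.yoneda_exact₂ T hT g hg0
  have hg : g = 0 := by rw [hk, t.zero' k h3 hQ, comp_zero]
  have hQ0 : IsZero Q := by
    obtain ⟨r, hr⟩ := Triangle.yoneda_exact₂ _ (rot_of_distTriang _ mem) (𝟙 Q)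
      (by change g ≫ 𝟙 Q = 0; rw [hg, zero_comp])
    have hP1 : t.le 0 (P⟦(1 : ℤ)⟧) :=
      t.le_monotone (by omega : (-1 : ℤ) ≤ 0) _ (t.le_shift 0 1 (-1) (by omega) P hP)
    rw [IsZero.iff_id_eq_zero, hr, t.zero' r hP1 hQ, comp_zero]; rfl
  haveI : IsIso f := ((Triangle.mk f g h).isZero₃_iff_isIso₁ mem).1 hQ0
  exact ((t.le 0).prop_iff_of_iso (asIso f)).1 hP

lemma aux_mono (hd : HeartData t A) (T : Triangle D) (hT : T ∈ distTriang D)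
    (hz : IsZero (hd.H0.obj T.obj₁)) : Mono (hd.H0.map T.mor₂) := by
  haveI := hd.homological
  exact (hd.H0.map_distinguished_exact T hT).mono_g (hz.eq_of_src _ 0)

lemma aux_epi (hd : HeartData t A) (T : Triangle D) (hT : T ∈ distTriang D)
    (hz : IsZero (hd.H0.obj T.obj₃)) : Epi (hd.H0.map T.mor₁) := by
  haveI := hd.homological
  exact (hd.H0.map_distinguished_exact T hT).epi_f (hz.eq_of_tgt _ 0)

lemma aux_H0_zero (hd : HeartData t A) {X : D} (hX : t.le (-1) X) :
    IsZero (hd.H0.obj X) :=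
  (hd.LE_vanish X (-1) 0 hX (by omega)).of_iso
    (hd.H0.mapIso ((shiftFunctorZero D ℤ).app X).symm)

/-- For `X ∈ D^{≤0}`, a truncation triangle `P → X → Q` with `P ∈ D^{≤-1}` and
`Q ≅ ι (H⁰ X)`. -/
lemma aux_key (hd : HeartData t A) {X : D} (hX : t.le 0 X) :
    ∃ (P Q : D) (f : P ⟶ X) (g : X ⟶ Q) (h : Q ⟶ P⟦(1 : ℤ)⟧),
      t.le (-1) P ∧ (Triangle.mk f g h ∈ distTriang D) ∧
        Nonempty (hd.ι.obj (hd.H0.obj X) ≅ Q) := by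
  obtain ⟨P, Q, hP, hQ, f, g, h, mem⟩ := t.exists_triangle X (-1) 0 (by omega)
  refine ⟨P, Q, f, g, h, hP, mem, ?_⟩
  have hP1 : t.le (-1) (P⟦(1 : ℤ)⟧) :=
    t.le_monotone (by omega : (-2 : ℤ) ≤ -1) _ (t.le_shift (-1) 1 (-2) (by omega) P hP)
  have hQle : t.le 0 Q :=
    aux_LE_ext t _ (rot_of_distTriang _ mem) hX
      (t.le_monotone (by omega : (-1 : ℤ) ≤ 0) _ hP1)
  obtain ⟨Z, ⟨e⟩⟩ := hd.heart_mem Q ⟨hQle, hQ⟩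
  haveI : Mono (hd.H0.map g) := aux_mono hd _ mem (aux_H0_zero hd hP)
  haveI : Epi (hd.H0.map g) :=
    aux_epi hd _ (rot_of_distTriang _ mem) (aux_H0_zero hd hP1)
  haveI : IsIso (hd.H0.map g) := isIso_of_mono_of_epi _
  exact ⟨hd.ι.mapIso (asIso (hd.H0.map g) ≪≫ hd.H0.mapIso e.symm ≪≫ hd.heartIso.app Z) ≪≫ e⟩

/-- The preaisle associated to a torsion class. -/
def UofT (hd : HeartData t A) (T : Set A) : Set D :=
  {X : D | t.le 0 X ∧ hd.H0.obj X ∈ T}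

/-- The torsion class associated to a preaisle. -/
def TofU (hd : HeartData t A) (U : Set D) : Set A :=
  {Y : A | hd.ι.obj Y ∈ U}

lemma TofU_torsion (hd : HeartData t A) {U : Set D} (hU : IsPreaisle U)
    (h1 : DLE t (-1) ⊆ U) (h2 : U ⊆ DLE t 0) : IsTorsionClass (TofU hd U) := by
  haveI := hd.additive
  refine ⟨⟨?_, ?_, ?_⟩, ?_, ?_⟩
  · intro X Y e hX
    exact hU.mem_of_iso (hd.ι.mapIso e) hX
  · exact hU.mem_of_iso (hd.ι.map_isZero (isZero_zero A)).isoZero.symm hU.zero_mem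
  · intro X Y hX hY
    obtain ⟨h, hh⟩ := (hd.shortExact_iff
      (ShortComplex.mk (biprod.inl : X ⟶ X ⊞ Y) biprod.snd (by simp))).1
      (ShortComplex.Splitting.ofHasBinaryBiproduct X Y).shortExact
    exact hU.ext _ hh hX hY
  · intro S hS hS1 hS3
    obtain ⟨h, hh⟩ := (hd.shortExact_iff S).1 hS
    exact hU.ext _ hh hS1 hS3
  · intro X Y f hf hX
    haveI := hf
    let S := ShortComplex.mk (kernel.ι f) f (kernel.condition f)
    have hse : S.ShortExact := { exact := S.exact_of_f_is_kernel (kernelIsKernel f) }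
    obtain ⟨h, hh⟩ := (hd.shortExact_iff S).1 hse
    exact hU.ext _ (rot_of_distTriang _ hh) hX
      (h1 (t.le_shift 0 1 (-1) (by omega) _ (hd.mem_heart (kernel f)).1))

lemma UofT_preaisle (hd : HeartData t A) {T : Set A} (hT : IsTorsionClass T) :
    IsPreaisle (UofT hd T) ∧ DLE t (-1) ⊆ UofT hd T ∧ UofT hd T ⊆ DLE t 0 := by
  haveI := hd.homological
  haveI := hd.additive
  haveI := hd.H0_additive
  have hzeroT : ∀ {Z : A}, IsZero Z → Z ∈ T := fun hz =>
    hT.subcat.mem_of_iso hz.isoZero.symm hT.subcat.zero_mem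
  refine ⟨⟨?_, ?_, ?_, ?_⟩, ?_, fun X hX => hX.1⟩
  · intro X Y e hX
    exact ⟨((t.le 0).prop_iff_of_iso e).1 hX.1,
      hT.subcat.mem_of_iso (hd.H0.mapIso e) hX.2⟩
  · refine ⟨((t.le 0).prop_iff_of_iso
      (hd.ι.map_isZero (isZero_zero A)).isoZero).1 (hd.mem_heart 0).1,
      hzeroT (hd.H0.map_isZero (isZero_zero D))⟩
  · intro Tri hTri hm1 hm3
    refine ⟨aux_LE_ext t Tri hTri hm1.1 hm3.1, ?_⟩
    have hz1 : IsZero (hd.H0.obj (Tri.obj₁⟦(1 : ℤ)⟧)) :=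
      aux_H0_zero hd (t.le_shift 0 1 (-1) (by omega) _ hm1.1)
    haveI : Epi (hd.H0.map Tri.mor₂) := aux_epi hd _ (rot_of_distTriang _ hTri) hz1
    have hex := hd.H0.map_distinguished_exact Tri hTri
    set b := hd.H0.map Tri.mor₂ with hb
    have hw : hd.H0.map Tri.mor₁ ≫ b = 0 :=
      ((shortComplexOfDistTriangle Tri hTri).map hd.H0).zero
    have hepi2 : Epi (kernel.lift b (hd.H0.map Tri.mor₁) hw) :=
      (ShortComplex.exact_iff_epi_kernel_lift _).1 hex
    have hK : kernel b ∈ T := hT.quot _ hepi2 hm1.2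
    let S2 := ShortComplex.mk (kernel.ι b) b (kernel.condition b)
    have hse2 : S2.ShortExact := { exact := S2.exact_of_f_is_kernel (kernelIsKernel b) }
    exact hT.ext S2 hse2 hK hm3.2
  · intro X hX
    exact ⟨t.le_monotone (by omega : (-1 : ℤ) ≤ 0) _ (t.le_shift 0 1 (-1) (by omega) X hX.1),
      hzeroT (hd.LE_vanish X 0 1 hX.1 (by omega))⟩
  · intro X hX
    exact ⟨t.le_monotone (by omega : (-1 : ℤ) ≤ 0) _ hX, hzeroT (aux_H0_zero hd hX)⟩

lemma TofU_UofT (hd : HeartData t A) {T : Set A} (hT : IsTorsionClass T) :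
    TofU hd (UofT hd T) = T := by
  ext Y
  constructor
  · rintro ⟨-, h⟩
    exact hT.subcat.mem_of_iso (hd.heartIso.app Y) h
  · intro hY
    exact ⟨(hd.mem_heart Y).1, hT.subcat.mem_of_iso (hd.heartIso.app Y).symm hY⟩

lemma UofT_TofU (hd : HeartData t A) {U : Set D} (hU : IsPreaisle U)
    (h1 : DLE t (-1) ⊆ U) (h2 : U ⊆ DLE t 0) : UofT hd (TofU hd U) = U := by
  ext X
  constructor
  · rintro ⟨hle, hH⟩
    obtain ⟨P, Q, f, g, h, hP, mem, ⟨e⟩⟩ := aux_key hd hle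
    exact hU.ext _ mem (h1 hP) (hU.mem_of_iso e hH)
  · intro hX
    have hle : t.le 0 X := h2 hX
    obtain ⟨P, Q, f, g, h, hP, mem, ⟨e⟩⟩ := aux_key hd hle
    have hP1 : t.le (-1) (P⟦(1 : ℤ)⟧) :=
      t.le_monotone (by omega : (-2 : ℤ) ≤ -1) _ (t.le_shift (-1) 1 (-2) (by omega) P hP)
    have hQ : Q ∈ U := hU.ext _ (rot_of_distTriang _ mem) hX (h1 hP1)
    exact ⟨hle, hU.mem_of_iso e.symm hQ⟩

end MainProofAux

/-- **Corollary.** If the t-structure is nondegenerate, then there is a bijective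
correspondence between the set of torsion classes in the heart `H` and the set of
intermediate preaisles (`D^{≤-1} ⊆ U ⊆ D^{≤0}`) in `D`. -/
theorem torsionClasses_equiv_intermediatePreaisles
    {D : Type*} [Category D] [Preadditive D] [HasZeroObject D] [HasShift D ℤ]
    [∀ n : ℤ, (shiftFunctor D n).Additive] [Pretriangulated D]
    {t : Triangulated.TStructure D} {A : Type*} [Category A] [Abelian A]
    (hd : HeartData t A) (hnd : NonDegenerateT t) :
    Nonempty ({T : Set A // IsTorsionClass T} ≃
      {U : Set D // IsPreaisle U ∧ DLE t (-1) ⊆ U ∧ U ⊆ DLE t 0}) := by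
  exact ⟨⟨fun T => ⟨UofT hd T.1, (UofT_preaisle hd T.2).1,
      (UofT_preaisle hd T.2).2.1, (UofT_preaisle hd T.2).2.2⟩,
    fun U => ⟨TofU hd U.1, TofU_torsion hd U.2.1 U.2.2.1 U.2.2.2⟩,
    fun T => Subtype.ext (TofU_UofT hd T.2),
    fun U => Subtype.ext (UofT_TofU hd U.2.1 U.2.2.1 U.2.2.2)⟩⟩

end ICEPaper
end
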